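/- (Asymptotics of g'' at infinity) Let g : (0, ∞) → ℝ be defined by g(ξ) = √(ξ tanh ξ). Then g is twice differentiable on (0, ∞) and ξ^{3/2} g''(ξ) tends to −1/4 as ξ → +∞; in particular |g''(ξ)| is asymptotically equivalent to (1/4)·ξ^{−3/2} as ξ → +∞. -/

import Mathlib

open Real Filter

/-- The function `g(ξ) = √(ξ tanh ξ)`. -/
noncomputable def gWW (ξ : ℝ) : ℝ := Real.sqrt (ξ * Real.tanh ξ)

lemma hasDerivAt_tanhWW (x : ℝ) :
    HasDerivAt Real.tanh ((Real.cosh x ^ 2)⁻¹) x := by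
  have h := (Real.hasDerivAt_sinh x).div (Real.hasDerivAt_cosh x)
    (ne_of_gt (Real.cosh_pos x))
  have hfun : (fun y => Real.sinh y / Real.cosh y) = Real.tanh := by
    funext y; rw [Real.tanh_eq_sinh_div_cosh]
  rw [show (Real.sinh / Real.cosh) = Real.tanh from hfun] at h
  refine h.congr_deriv (Eq.symm ?_)
  have := Real.cosh_sq_sub_sinh_sq x
  field_simp
  linarith
lemma tanh_posWW {x : ℝ} (hx : 0 < x) : 0 < Real.tanh x := by
  rw [Real.tanh_eq_sinh_div_cosh]
  exact div_pos (Real.sinh_pos_iff.mpr hx) (Real.cosh_pos x)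

noncomputable def g1WW (x : ℝ) : ℝ :=
  (Real.tanh x + x * (Real.cosh x ^ 2)⁻¹) / (2 * Real.sqrt (x * Real.tanh x))

noncomputable def g2WW (x : ℝ) : ℝ :=
  (2 * (Real.cosh x ^ 2)⁻¹ - 2 * x * Real.tanh x * (Real.cosh x ^ 2)⁻¹) /
      (2 * Real.sqrt (x * Real.tanh x)) -
    (Real.tanh x + x * (Real.cosh x ^ 2)⁻¹) ^ 2 / (4 * Real.sqrt (x * Real.tanh x) ^ 3)

lemma hasDerivAt_uWW (x : ℝ) :
    HasDerivAt (fun y => y * Real.tanh y)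
      (Real.tanh x + x * (Real.cosh x ^ 2)⁻¹) x := by
  have h := (hasDerivAt_id' x).mul (hasDerivAt_tanhWW x)
  simp at h
  exact h

lemma hasDerivAt_gWW {x : ℝ} (hx : 0 < x) : HasDerivAt gWW (g1WW x) x := by
  have hu : 0 < x * Real.tanh x := mul_pos hx (tanh_posWW hx)
  have hs := Real.hasDerivAt_sqrt (ne_of_gt hu)
  have h := hs.comp x (hasDerivAt_uWW x)
  have : gWW = (Real.sqrt ·) ∘ fun y => y * Real.tanh y := rfl
  rw [this]
  refine h.congr_deriv (Eq.symm ?_)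
  unfold g1WW
  field_simp

lemma hasDerivAt_g1WW {x : ℝ} (hx : 0 < x) : HasDerivAt g1WW (g2WW x) x := by
  have ht : 0 < Real.tanh x := tanh_posWW hx
  have hu : 0 < x * Real.tanh x := mul_pos hx ht
  have hq : 0 < Real.sqrt (x * Real.tanh x) := Real.sqrt_pos.mpr hu
  have hq2 : Real.sqrt (x * Real.tanh x) ^ 2 = x * Real.tanh x := Real.sq_sqrt hu.le
  -- derivative of s = (cosh)⁻²
  have hcosh2 : HasDerivAt (fun y => Real.cosh y ^ 2)
      (2 * Real.cosh x ^ 1 * Real.sinh x) x := (Real.hasDerivAt_cosh x).pow 2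
  have hcoshne : Real.cosh x ^ 2 ≠ 0 := by positivity
  have hsinv : HasDerivAt (fun y => (Real.cosh y ^ 2)⁻¹)
      (-(2 * Real.cosh x ^ 1 * Real.sinh x) / (Real.cosh x ^ 2) ^ 2) x := hcosh2.inv hcoshne
  have hN : HasDerivAt (fun y => Real.tanh y + y * (Real.cosh y ^ 2)⁻¹)
      ((Real.cosh x ^ 2)⁻¹ +
        (1 * (Real.cosh x ^ 2)⁻¹ +
          x * (-(2 * Real.cosh x ^ 1 * Real.sinh x) / (Real.cosh x ^ 2) ^ 2))) x :=
    (hasDerivAt_tanhWW x).add ((hasDerivAt_id x).mul hsinv)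
  have hD : HasDerivAt (fun y => 2 * Real.sqrt (y * Real.tanh y)) (2 * g1WW x) x := by
    have := (hasDerivAt_gWW hx).const_mul 2
    simpa [gWW] using this
  have hDne : 2 * Real.sqrt (x * Real.tanh x) ≠ 0 := by positivity
  have h := hN.div hD hDne
  have hg1 : g1WW = fun y =>
      (Real.tanh y + y * (Real.cosh y ^ 2)⁻¹) / (2 * Real.sqrt (y * Real.tanh y)) := rfl
  rw [hg1]
  refine h.congr_deriv (Eq.symm ?_)
  unfold g2WW g1WW
  have hco : (0:ℝ) < Real.cosh x := Real.cosh_pos x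
  have hsinh : Real.sinh x = Real.tanh x * Real.cosh x := by
    rw [Real.tanh_eq_sinh_div_cosh]; field_simp
  rw [hsinh]
  field_simp
  ring

lemma tendsto_tanh_atTopWW : Tendsto Real.tanh atTop (nhds 1) := by
  have heq : ∀ x : ℝ, Real.tanh x =
      (1 - Real.exp (-2*x)) / (1 + Real.exp (-2*x)) := by
    intro x
    have h2 : Real.exp (-2*x) = Real.exp (-x) / Real.exp x := by
      rw [eq_div_iff (Real.exp_ne_zero x), ← Real.exp_add]; ring_nf
    have hd1 : Real.exp x + Real.exp (-x) ≠ 0 := by positivity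
    have hd2 : 1 + Real.exp (-2*x) ≠ 0 := by positivity
    rw [Real.tanh_eq_sinh_div_cosh, Real.sinh_eq, Real.cosh_eq, h2]
    field_simp
  have h2x : Tendsto (fun x : ℝ => -(2*x)) atTop atBot :=
    tendsto_neg_atTop_atBot.comp (tendsto_id.const_mul_atTop two_pos)
  have he : Tendsto (fun x : ℝ => Real.exp (-2*x)) atTop (nhds 0) := by
    have := Real.tendsto_exp_atBot.comp h2x
    refine this.congr fun x => ?_
    simp [Function.comp, neg_mul]
  have : Tendsto (fun x : ℝ => (1 - Real.exp (-2*x)) / (1 + Real.exp (-2*x)))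
      atTop (nhds ((1 - 0) / (1 + 0))) :=
    (tendsto_const_nhds.sub he).div (tendsto_const_nhds.add he) (by norm_num)
  simpa [funext heq] using this

lemma tendsto_pow_mul_invcosh_sqWW (n : ℕ) :
    Tendsto (fun x : ℝ => x ^ n * (Real.cosh x ^ 2)⁻¹) atTop (nhds 0) := by
  have hg : Tendsto (fun x : ℝ => 4 * (x ^ n * Real.exp (-2*x))) atTop (nhds (4 * 0)) := by
    have h := tendsto_rpow_mul_exp_neg_mul_atTop_nhds_zero n 2 two_pos
    refine (h.const_mul 4).congr fun x => ?_
    rw [Real.rpow_natCast]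
  rw [mul_zero] at hg
  apply squeeze_zero' (g := fun x : ℝ => 4 * (x ^ n * Real.exp (-2*x)))
  · filter_upwards [eventually_ge_atTop (0:ℝ)] with x hx0
    positivity
  · filter_upwards [eventually_ge_atTop (0:ℝ)] with x hx0
    have hc := Real.cosh_pos x
    have hexp : Real.exp (2*x) = Real.exp x * Real.exp x := by
      rw [← Real.exp_add]; ring_nf
    have h1 : Real.exp (2*x) / 4 ≤ Real.cosh x ^ 2 := by
      rw [Real.cosh_eq, hexp]
      nlinarith [Real.exp_pos x, Real.exp_pos (-x), mul_pos (Real.exp_pos x) (Real.exp_pos (-x))]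
    have hE : (0:ℝ) < Real.exp (2*x) / 4 := by positivity
    have h2 : (Real.cosh x ^ 2)⁻¹ ≤ (Real.exp (2*x) / 4)⁻¹ := by
      exact inv_anti₀ hE h1
    have h3 : (Real.exp (2*x) / 4)⁻¹ = 4 * Real.exp (-2*x) := by
      rw [show (-2*x : ℝ) = -(2*x) by ring, Real.exp_neg]
      field_simp
    calc x ^ n * (Real.cosh x ^ 2)⁻¹ ≤ x ^ n * (4 * Real.exp (-2*x)) := by
          exact mul_le_mul_of_nonneg_left (h3 ▸ h2) (by positivity)
      _ = 4 * (x ^ n * Real.exp (-2*x)) := by ring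
  · exact hg

set_option maxHeartbeats 1000000 in
/-- Asymptotics of `g''` at infinity: `g` is twice differentiable on `(0,∞)` and
`ξ^{3/2} g''(ξ) → −1/4` as `ξ → +∞`; in particular `|g''(ξ)| ~ (1/4) ξ^{−3/2}`. -/
theorem g_second_deriv_asymptotics_at_infinity :
    (∀ ξ : ℝ, 0 < ξ → DifferentiableAt ℝ gWW ξ) ∧
    (∀ ξ : ℝ, 0 < ξ → DifferentiableAt ℝ (deriv gWW) ξ) ∧
    Filter.Tendsto (fun ξ : ℝ => ξ ^ ((3:ℝ)/2) * iteratedDeriv 2 gWW ξ)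
      Filter.atTop (nhds (-(1:ℝ)/4)) := by
  have hev : ∀ {x : ℝ}, 0 < x → deriv gWW =ᶠ[nhds x] g1WW := by
    intro x hx
    filter_upwards [Ioi_mem_nhds hx] with y hy
    exact (hasDerivAt_gWW hy).deriv
  refine ⟨fun ξ hξ => (hasDerivAt_gWW hξ).differentiableAt, fun ξ hξ => ?_, ?_⟩
  · exact ((hev hξ).differentiableAt_iff).mpr (hasDerivAt_g1WW hξ).differentiableAt
  · have hit : ∀ {x : ℝ}, 0 < x → iteratedDeriv 2 gWW x = g2WW x := by
      intro x hx
      rw [show (2:ℕ) = 1 + 1 from rfl, iteratedDeriv_succ, iteratedDeriv_one]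
      rw [(hev hx).deriv_eq]
      exact (hasDerivAt_g1WW hx).deriv
    have ht1 := tendsto_tanh_atTopWW
    have hst : Tendsto (fun x : ℝ => Real.sqrt (Real.tanh x)) atTop (nhds 1) := by
      have := (Real.continuous_sqrt.tendsto 1).comp ht1
      simp at this
      exact this
    have h1 := tendsto_pow_mul_invcosh_sqWW 1
    have h2 := tendsto_pow_mul_invcosh_sqWW 2
    have hT1 := ((h1.const_mul 2).sub ((h2.mul ht1).const_mul 2)).div
      (hst.const_mul 2) (by norm_num : (2:ℝ)*1 ≠ 0)
    have hT1' : Tendsto (fun x : ℝ =>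
        (2 * (x ^ 1 * (Real.cosh x ^ 2)⁻¹)
            - 2 * (x ^ 2 * (Real.cosh x ^ 2)⁻¹) * Real.tanh x)
          / (2 * Real.sqrt (Real.tanh x))) atTop (nhds ((2*0 - 2*(0*1))/(2*1))) :=
      hT1.congr (fun x => by simp only [Pi.div_apply]; ring_nf)
    have hT2 := ((ht1.add h1).pow 2).div ((ht1.mul hst).const_mul 4)
      (by norm_num : (4:ℝ)*(1*1) ≠ 0)
    have hT2' : Tendsto (fun x : ℝ =>
        (Real.tanh x + x ^ 1 * (Real.cosh x ^ 2)⁻¹) ^ 2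
          / (4 * (Real.tanh x * Real.sqrt (Real.tanh x)))) atTop
        (nhds ((1+0)^2/(4*(1*1)))) :=
      hT2.congr (fun x => by simp only [Pi.div_apply])
    have hF := hT1'.sub hT2'
    have hval : (2*0 - 2*(0*1))/(2*1) - ((1:ℝ)+0)^2/(4*(1*1)) = -(1:ℝ)/4 := by norm_num
    rw [hval] at hF
    refine Tendsto.congr' ?_ hF
    filter_upwards [eventually_gt_atTop (0:ℝ)] with x hx
    have ht : 0 < Real.tanh x := tanh_posWW hx
    have hsx : 0 < Real.sqrt x := Real.sqrt_pos.mpr hx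
    have hstp : 0 < Real.sqrt (Real.tanh x) := Real.sqrt_pos.mpr ht
    have hsq : Real.sqrt (x * Real.tanh x) = Real.sqrt x * Real.sqrt (Real.tanh x) :=
      Real.sqrt_mul hx.le _
    have hx2 : Real.sqrt x ^ 2 = x := Real.sq_sqrt hx.le
    have ht2 : Real.sqrt (Real.tanh x) ^ 2 = Real.tanh x := Real.sq_sqrt ht.le
    have hrpow : x ^ ((3:ℝ)/2) = x * Real.sqrt x := by
      rw [show (3:ℝ)/2 = 1 + 1/2 by norm_num, Real.rpow_add hx, Real.rpow_one,
        ← Real.sqrt_eq_rpow]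
    rw [hit hx, hrpow]
    unfold g2WW
    rw [hsq]
    set a := Real.sqrt x with ha
    set b := Real.sqrt (Real.tanh x) with hb
    rw [← ht2, ← hx2]
    have hcne : Real.cosh x ≠ 0 := (Real.cosh_pos x).ne'
    field_simp
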